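/- Let μ ∈ ℂ, let p₁, p₂, p₃ ∈ ℂ with p₁ + p₂ + p₃ = 1, and let x, y, z ∈ ℂ satisfy the μ-Markoff equation x² + y² + z² − xyz = μ, with xyz ≠ 0 and x² ≠ μ, y² ≠ μ, z² ≠ μ. Then Ψ_{μ,p₂,p₃}(y,z;x) + Ψ_{μ,p₃,p₁}(z,x;y) + Ψ_{μ,p₁,p₂}(x,y;z) = 1. -/

import Mathlib

/-- The weighted edge value
`Ψ_{μ,p,q}(x,y;z) = z/(xy) − (1/2 − z/(xy))(p·μ/(x²−μ) + q·μ/(y²−μ))`. -/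
noncomputable def PsiW (μ p q x y z : ℂ) : ℂ :=
  z / (x * y) - (1 / 2 - z / (x * y)) * (p * μ / (x ^ 2 - μ) + q * μ / (y ^ 2 - μ))

set_option maxHeartbeats 2000000 in
/-- if `p₁ + p₂ + p₃ = 1` and `(x,y,z)` satisfies the μ-Markoff equation
with `xyz ≠ 0` and `x², y², z² ≠ μ`, then
`Ψ_{μ,p₂,p₃}(y,z;x) + Ψ_{μ,p₃,p₁}(z,x;y) + Ψ_{μ,p₁,p₂}(x,y;z) = 1`. -/
theorem PsiW_vertex_sum_eq_one (μ p₁ p₂ p₃ x y z : ℂ) (hp : p₁ + p₂ + p₃ = 1)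
    (hmarkoff : x ^ 2 + y ^ 2 + z ^ 2 - x * y * z = μ)
    (hxyz : x * y * z ≠ 0) (hx : x ^ 2 ≠ μ) (hy : y ^ 2 ≠ μ) (hz : z ^ 2 ≠ μ) :
    PsiW μ p₂ p₃ y z x + PsiW μ p₃ p₁ z x y + PsiW μ p₁ p₂ x y z = 1 := by
  have hx0 : x ≠ 0 := fun h => hxyz (by simp [h])
  have hy0 : y ≠ 0 := fun h => hxyz (by simp [h])
  have hz0 : z ≠ 0 := fun h => hxyz (by simp [h])
  have hx' : x ^ 2 - μ ≠ 0 := sub_ne_zero.mpr hx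
  have hy' : y ^ 2 - μ ≠ 0 := sub_ne_zero.mpr hy
  have hz' : z ^ 2 - μ ≠ 0 := sub_ne_zero.mpr hz
  subst hmarkoff
  have hS : x / (y * z) + y / (z * x) + z / (x * y)
      = 1 + (x ^ 2 + y ^ 2 + z ^ 2 - x * y * z) / (x * y * z) := by
    field_simp; ring
  have hA : (1 - y / (z * x) - z / (x * y)) *
      ((x ^ 2 + y ^ 2 + z ^ 2 - x * y * z) / (x ^ 2 - (x ^ 2 + y ^ 2 + z ^ 2 - x * y * z)))
      = (x ^ 2 + y ^ 2 + z ^ 2 - x * y * z) / (x * y * z) := by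
    have e : x ^ 2 - (x ^ 2 + y ^ 2 + z ^ 2 - x * y * z) = x * y * z - y ^ 2 - z ^ 2 := by ring
    have hx'' : x * y * z - y ^ 2 - z ^ 2 ≠ 0 := e ▸ hx'
    have h1 : 1 - y / (z * x) - z / (x * y) = (x * y * z - y ^ 2 - z ^ 2) / (x * y * z) := by
      field_simp
    rw [e, h1, div_mul_div_comm, mul_comm (x * y * z) _, mul_div_mul_left _ _ hx'']
  have hB : (1 - z / (x * y) - x / (y * z)) *
      ((x ^ 2 + y ^ 2 + z ^ 2 - x * y * z) / (y ^ 2 - (x ^ 2 + y ^ 2 + z ^ 2 - x * y * z)))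
      = (x ^ 2 + y ^ 2 + z ^ 2 - x * y * z) / (x * y * z) := by
    have e : y ^ 2 - (x ^ 2 + y ^ 2 + z ^ 2 - x * y * z) = x * y * z - x ^ 2 - z ^ 2 := by ring
    have hy'' : x * y * z - x ^ 2 - z ^ 2 ≠ 0 := e ▸ hy'
    have h1 : 1 - z / (x * y) - x / (y * z) = (x * y * z - x ^ 2 - z ^ 2) / (x * y * z) := by
      field_simp; ring
    rw [e, h1, div_mul_div_comm, mul_comm (x * y * z) _, mul_div_mul_left _ _ hy'']
  have hC : (1 - x / (y * z) - y / (z * x)) *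
      ((x ^ 2 + y ^ 2 + z ^ 2 - x * y * z) / (z ^ 2 - (x ^ 2 + y ^ 2 + z ^ 2 - x * y * z)))
      = (x ^ 2 + y ^ 2 + z ^ 2 - x * y * z) / (x * y * z) := by
    field_simp; ring
  unfold PsiW
  linear_combination hS - p₁ * hA - p₂ * hB - p₃ * hC
    - ((x ^ 2 + y ^ 2 + z ^ 2 - x * y * z) / (x * y * z)) * hp
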